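/- arXiv:2009.10797 — 5 statements merged into one kernel-verified Lean document; each statement's English description precedes it below -/
import Mathlib

section
/- Let V be a real vector space equipped with two almost contact structures (Φ₁, ξ₁, η₁) and (Φ₂, ξ₂, η₂) satisfying Φ₁ξ₂ = -Φ₂ξ₁, η₁∘Φ₂ = -η₂∘Φ₁, η₁(ξ₂) = η₂(ξ₁) = 0, and Φ₁∘Φ₂ - η₂⊗ξ₁ = -Φ₂∘Φ₁ + η₁⊗ξ₂. Define ξ₃ := Φ₁ξ₂, η₃ := η₁∘Φ₂, and Φ₃ := Φ₁∘Φ₂ - η₂⊗ξ₁. Then η₃(ξ₃) = 1. -/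
theorem stmt2 {V : Type*} [AddCommGroup V] [Module ℝ V]
    (Φ₁ Φ₂ : V →ₗ[ℝ] V) (ξ₁ ξ₂ : V) (η₁ η₂ : V →ₗ[ℝ] ℝ)
    (hΦ₁ : ∀ x : V, Φ₁ (Φ₁ x) = -x + η₁ x • ξ₁) (hη₁ : η₁ ξ₁ = 1)
    (hΦ₂ : ∀ x : V, Φ₂ (Φ₂ x) = -x + η₂ x • ξ₂) (hη₂ : η₂ ξ₂ = 1)
    (h1 : Φ₁ ξ₂ = -Φ₂ ξ₁)
    (h2 : ∀ x : V, η₁ (Φ₂ x) = -η₂ (Φ₁ x))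
    (h3 : η₁ ξ₂ = 0) (h4 : η₂ ξ₁ = 0)
    (h5 : ∀ x : V, Φ₁ (Φ₂ x) - η₂ x • ξ₁ = -Φ₂ (Φ₁ x) + η₁ x • ξ₂) :
    η₁ (Φ₂ (Φ₁ ξ₂)) = 1 := by
  rw [h1, map_neg, map_neg, hΦ₂, h4]
  simp [hη₁]
end

section
/- With the hypotheses of Kuo's compatibility conditions on two almost contact structures (Φ₁, ξ₁, η₁), (Φ₂, ξ₂, η₂) on a real vector space V (namely Φ₁ξ₂ = -Φ₂ξ₁, η₁∘Φ₂ = -η₂∘Φ₁, η₁(ξ₂) = η₂(ξ₁) = 0, and Φ₁∘Φ₂ - η₂⊗ξ₁ = -Φ₂∘Φ₁ + η₁⊗ξ₂), the triple (Φ₃, ξ₃, η₃) defined by Φ₃ := Φ₁∘Φ₂ - η₂⊗ξ₁, ξ₃ := Φ₁ξ₂, η₃ := η₁∘Φ₂ satisfies Φ₃∘Φ₃ = -id + η₃⊗ξ₃, i.e. (Φ₃, ξ₃, η₃) is an almost contact structure. -/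
lemma acs_phi_xi {V : Type*} [AddCommGroup V] [Module ℝ V]
    (Φ : V →ₗ[ℝ] V) (ξ : V) (η : V →ₗ[ℝ] ℝ)
    (hΦ : ∀ x : V, Φ (Φ x) = -x + η x • ξ) (hη : η ξ = 1) :
    Φ ξ = 0 := by
  have h0 : Φ (Φ ξ) = 0 := by rw [hΦ, hη]; simp
  set c := η (Φ ξ) with hc
  have h1 : Φ ξ = c • ξ := by
    have := hΦ (Φ ξ)
    rw [h0, map_zero, ← hc] at this
    linear_combination (norm := module) this
  have h2 : (0:V) = c • (c • ξ) := by
    have t := congrArg Φ h1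
    rw [h0, map_smul, h1] at t
    exact t
  have h3 : c * c = 0 := by
    have := congrArg η h2
    simpa [hη, smul_smul] using this.symm
  rw [h1, mul_self_eq_zero.mp h3, zero_smul]

lemma acs_eta_phi {V : Type*} [AddCommGroup V] [Module ℝ V]
    (Φ : V →ₗ[ℝ] V) (ξ : V) (η : V →ₗ[ℝ] ℝ)
    (hΦ : ∀ x : V, Φ (Φ x) = -x + η x • ξ) (hη : η ξ = 1) :
    ∀ x : V, η (Φ x) = 0 := by
  intro x
  have hfix := acs_phi_xi Φ ξ η hΦ hη
  have e1 : Φ (Φ (Φ x)) = -Φ x := by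
    rw [hΦ x, map_add, map_neg, map_smul, hfix, smul_zero, add_zero]
  have e2 := hΦ (Φ x)
  rw [e1] at e2
  have : η (Φ x) • ξ = 0 := by linear_combination (norm := module) -e2
  have := congrArg η this
  simpa [hη] using this

theorem stmt3 {V : Type*} [AddCommGroup V] [Module ℝ V]
    (Φ₁ Φ₂ : V →ₗ[ℝ] V) (ξ₁ ξ₂ : V) (η₁ η₂ : V →ₗ[ℝ] ℝ)
    (hΦ₁ : ∀ x : V, Φ₁ (Φ₁ x) = -x + η₁ x • ξ₁) (hη₁ : η₁ ξ₁ = 1)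
    (hΦ₂ : ∀ x : V, Φ₂ (Φ₂ x) = -x + η₂ x • ξ₂) (hη₂ : η₂ ξ₂ = 1)
    (h1 : Φ₁ ξ₂ = -Φ₂ ξ₁)
    (h2 : ∀ x : V, η₁ (Φ₂ x) = -η₂ (Φ₁ x))
    (h3 : η₁ ξ₂ = 0) (h4 : η₂ ξ₁ = 0)
    (h5 : ∀ x : V, Φ₁ (Φ₂ x) - η₂ x • ξ₁ = -Φ₂ (Φ₁ x) + η₁ x • ξ₂) :
    ∀ x : V,
      (Φ₁ (Φ₂ (Φ₁ (Φ₂ x) - η₂ x • ξ₁)) - η₂ (Φ₁ (Φ₂ x) - η₂ x • ξ₁) • ξ₁)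
        = -x + η₁ (Φ₂ x) • Φ₁ ξ₂ := by
  intro x
  have hη₂Φ₂ := acs_eta_phi Φ₂ ξ₂ η₂ hΦ₂ hη₂
  set y := Φ₂ x with hy
  -- η₂ of Φ₃ x
  have eA : η₂ (Φ₁ y - η₂ x • ξ₁) = η₁ x := by
    have := h2 y
    rw [map_sub, map_smul, h4, smul_zero, sub_zero]
    have hΦ₂y : Φ₂ y = -x + η₂ x • ξ₂ := hΦ₂ x
    have : η₁ (Φ₂ y) = -η₂ (Φ₁ y) := h2 y
    rw [hΦ₂y, map_add, map_neg, map_smul, h3, smul_zero, add_zero] at this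
    linarith
  -- Φ₂ (Φ₃ x) = Φ₁ x + η₁ y • ξ₂
  have eB : Φ₂ (Φ₁ y - η₂ x • ξ₁) = Φ₁ x + η₁ y • ξ₂ := by
    have h5y := h5 y
    have hΦ₂y : Φ₂ y = -x + η₂ x • ξ₂ := hΦ₂ x
    have e1 : Φ₁ (Φ₂ y) = -Φ₁ x + η₂ x • Φ₁ ξ₂ := by
      rw [hΦ₂y, map_add, map_neg, map_smul]
    have e2 : η₂ y = 0 := hη₂Φ₂ x
    rw [map_sub, map_smul]
    rw [e2, zero_smul, sub_zero] at h5y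
    rw [e1] at h5y
    have h1' : Φ₂ ξ₁ = -Φ₁ ξ₂ := by rw [h1, neg_neg]
    rw [h1']
    linear_combination (norm := module) h5y
  rw [eB, eA, map_add, map_smul, hΦ₁ x]
  module
end

section
/- Let V be a real vector space carrying an almost contact 3-structure (Φ_α, ξ_α, η_α), α = 1,2,3, i.e. each triple is an almost contact structure and for every cyclic permutation (α,β,γ) of (1,2,3): Φ_α∘Φ_β - η_β⊗ξ_α = Φ_γ, Φ_α(ξ_β) = ξ_γ, and η_α∘Φ_β = η_γ. Define on V ⊕ ℝ the endomorphisms I_α(x, t) := (Φ_α(x) + t·ξ_α, -η_α(x)). Then I_α ∘ I_β = I_γ and I_β ∘ I_α = -I_γ for every cyclic permutation (α,β,γ) of (1,2,3); in particular (I₁, I₂, I₃) is an almost hypercomplex (quaternionic) triple: I_α² = -id and I₁I₂ = I₃ = -I₂I₁. -/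
lemma acs_aux {V : Type*} [AddCommGroup V] [Module ℝ V]
    (Φ : V →ₗ[ℝ] V) (ξ : V) (η : V →ₗ[ℝ] ℝ)
    (hΦ : ∀ x : V, Φ (Φ x) = -x + η x • ξ) (hη : η ξ = 1) :
    Φ ξ = 0 ∧ ∀ x : V, η (Φ x) = 0 := by
  have hξ0 : ξ ≠ 0 := by intro h; rw [h] at hη; simp at hη
  have h1 : Φ (Φ ξ) = 0 := by rw [hΦ, hη, one_smul]; abel
  have h2 : Φ ξ = η (Φ ξ) • ξ := by
    have h := hΦ (Φ ξ)
    rw [h1, map_zero] at h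
    have h' := h.symm
    rwa [neg_add_eq_zero] at h'
  have h3 : (η (Φ ξ)) ^ 2 • ξ = 0 := by
    calc (η (Φ ξ)) ^ 2 • ξ = η (Φ ξ) • (η (Φ ξ) • ξ) := by rw [pow_two, mul_smul]
      _ = η (Φ ξ) • Φ ξ := by rw [← h2]
      _ = Φ (η (Φ ξ) • ξ) := by rw [map_smul]
      _ = Φ (Φ ξ) := by rw [← h2]
      _ = 0 := h1
  have h4 : η (Φ ξ) = 0 := by
    rcases smul_eq_zero.mp h3 with h | h
    · exact pow_eq_zero_iff (n := 2) (by norm_num) |>.mp h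
    · exact absurd h hξ0
  have hΦξ : Φ ξ = 0 := by rw [h2, h4, zero_smul]
  refine ⟨hΦξ, fun x => ?_⟩
  have ha := hΦ (Φ x)
  have hb : Φ (Φ (Φ x)) = -Φ x := by
    rw [hΦ x, map_add, map_neg, map_smul, hΦξ, smul_zero, add_zero]
  rw [hb] at ha
  have hc : η (Φ x) • ξ = 0 := by linear_combination (norm := module) -ha
  rcases smul_eq_zero.mp hc with h | h
  · exact h
  · exact absurd h hξ0

theorem stmt4 {V : Type*} [AddCommGroup V] [Module ℝ V]
    (Φ₁ Φ₂ Φ₃ : V →ₗ[ℝ] V) (ξ₁ ξ₂ ξ₃ : V) (η₁ η₂ η₃ : V →ₗ[ℝ] ℝ)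
    (hΦ₁ : ∀ x : V, Φ₁ (Φ₁ x) = -x + η₁ x • ξ₁) (hη₁ : η₁ ξ₁ = 1)
    (hΦ₂ : ∀ x : V, Φ₂ (Φ₂ x) = -x + η₂ x • ξ₂) (hη₂ : η₂ ξ₂ = 1)
    (hΦ₃ : ∀ x : V, Φ₃ (Φ₃ x) = -x + η₃ x • ξ₃) (hη₃ : η₃ ξ₃ = 1)
    (hc12 : ∀ x : V, Φ₁ (Φ₂ x) - η₂ x • ξ₁ = Φ₃ x)
    (hc23 : ∀ x : V, Φ₂ (Φ₃ x) - η₃ x • ξ₂ = Φ₁ x)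
    (hc31 : ∀ x : V, Φ₃ (Φ₁ x) - η₁ x • ξ₃ = Φ₂ x)
    (hξ12 : Φ₁ ξ₂ = ξ₃) (hξ23 : Φ₂ ξ₃ = ξ₁) (hξ31 : Φ₃ ξ₁ = ξ₂)
    (hη12 : ∀ x : V, η₁ (Φ₂ x) = η₃ x)
    (hη23 : ∀ x : V, η₂ (Φ₃ x) = η₁ x)
    (hη31 : ∀ x : V, η₃ (Φ₁ x) = η₂ x)
    (I₁ I₂ I₃ : V × ℝ → V × ℝ)
    (hI₁ : ∀ x : V, ∀ t : ℝ, I₁ (x, t) = (Φ₁ x + t • ξ₁, -η₁ x))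
    (hI₂ : ∀ x : V, ∀ t : ℝ, I₂ (x, t) = (Φ₂ x + t • ξ₂, -η₂ x))
    (hI₃ : ∀ x : V, ∀ t : ℝ, I₃ (x, t) = (Φ₃ x + t • ξ₃, -η₃ x)) :
    (∀ p : V × ℝ, I₁ (I₂ p) = I₃ p) ∧
    (∀ p : V × ℝ, I₂ (I₃ p) = I₁ p) ∧
    (∀ p : V × ℝ, I₃ (I₁ p) = I₂ p) ∧
    (∀ p : V × ℝ, I₂ (I₁ p) = -I₃ p) ∧
    (∀ p : V × ℝ, I₃ (I₂ p) = -I₁ p) ∧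
    (∀ p : V × ℝ, I₁ (I₃ p) = -I₂ p) ∧
    (∀ p : V × ℝ, I₁ (I₁ p) = -p) ∧
    (∀ p : V × ℝ, I₂ (I₂ p) = -p) ∧
    (∀ p : V × ℝ, I₃ (I₃ p) = -p) := by
  obtain ⟨hp1, he1⟩ := acs_aux Φ₁ ξ₁ η₁ hΦ₁ hη₁
  obtain ⟨hp2, he2⟩ := acs_aux Φ₂ ξ₂ η₂ hΦ₂ hη₂
  obtain ⟨hp3, he3⟩ := acs_aux Φ₃ ξ₃ η₃ hΦ₃ hη₃
  -- Φ on other ξ's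
  have hξ13 : Φ₁ ξ₃ = -ξ₂ := by
    have := hc23 ξ₃; rw [hp3, map_zero, hη₃, one_smul, zero_sub] at this; exact this.symm
  have hξ21 : Φ₂ ξ₁ = -ξ₃ := by
    have := hc31 ξ₁; rw [hp1, map_zero, hη₁, one_smul, zero_sub] at this; exact this.symm
  have hξ32 : Φ₃ ξ₂ = -ξ₁ := by
    have := hc12 ξ₂; rw [hp2, map_zero, hη₂, one_smul, zero_sub] at this; exact this.symm
  -- cross η vanishing
  have hn12 : η₁ ξ₂ = 0 := by
    have := he1 ξ₃; rw [hξ13, map_neg, neg_eq_zero] at this; exact this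
  have hn13 : η₁ ξ₃ = 0 := by have := he1 ξ₂; rwa [hξ12] at this
  have hn21 : η₂ ξ₁ = 0 := by have := he2 ξ₃; rwa [hξ23] at this
  have hn23 : η₂ ξ₃ = 0 := by
    have := he2 ξ₁; rw [hξ21, map_neg, neg_eq_zero] at this; exact this
  have hn31 : η₃ ξ₁ = 0 := by
    have := he3 ξ₂; rw [hξ32, map_neg, neg_eq_zero] at this; exact this
  have hn32 : η₃ ξ₂ = 0 := by have := he3 ξ₁; rwa [hξ31] at this
  -- reverse η compositions
  have hr21 : ∀ x : V, η₂ (Φ₁ x) = -η₃ x := by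
    intro x
    have := congrArg η₂ (hc23 x)
    rw [map_sub, map_smul, he2, hη₂, smul_eq_mul, mul_one, zero_sub] at this
    exact this.symm
  have hr32 : ∀ x : V, η₃ (Φ₂ x) = -η₁ x := by
    intro x
    have := congrArg η₃ (hc31 x)
    rw [map_sub, map_smul, he3, hη₃, smul_eq_mul, mul_one, zero_sub] at this
    exact this.symm
  have hr13 : ∀ x : V, η₁ (Φ₃ x) = -η₂ x := by
    intro x
    have := congrArg η₁ (hc12 x)
    rw [map_sub, map_smul, he1, hη₁, smul_eq_mul, mul_one, zero_sub] at this
    exact this.symm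
  -- reverse Φ compositions
  have hrc21 : ∀ x : V, Φ₂ (Φ₁ x) = -Φ₃ x + η₁ x • ξ₂ := by
    intro x
    have := congrArg Φ₂ (hc23 x)
    rw [map_sub, map_smul, hΦ₂ (Φ₃ x), hη23, hp2, smul_zero, sub_zero] at this
    exact this.symm
  have hrc32 : ∀ x : V, Φ₃ (Φ₂ x) = -Φ₁ x + η₂ x • ξ₃ := by
    intro x
    have := congrArg Φ₃ (hc31 x)
    rw [map_sub, map_smul, hΦ₃ (Φ₁ x), hη31, hp3, smul_zero, sub_zero] at this
    exact this.symm
  have hrc13 : ∀ x : V, Φ₁ (Φ₃ x) = -Φ₂ x + η₃ x • ξ₁ := by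
    intro x
    have := congrArg Φ₁ (hc12 x)
    rw [map_sub, map_smul, hΦ₁ (Φ₂ x), hη12, hp1, smul_zero, sub_zero] at this
    exact this.symm
  refine ⟨?_, ?_, ?_, ?_, ?_, ?_, ?_, ?_, ?_⟩ <;> rintro ⟨x, t⟩
  · rw [hI₂ x t, hI₁ _ _, hI₃ x t, Prod.mk.injEq]
    constructor
    · rw [map_add, map_smul, hξ12, ← hc12 x]; module
    · rw [map_add, map_smul, hη12, hn12, smul_zero, add_zero]
  · rw [hI₃ x t, hI₂ _ _, hI₁ x t, Prod.mk.injEq]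
    constructor
    · rw [map_add, map_smul, hξ23, ← hc23 x]; module
    · rw [map_add, map_smul, hη23, hn23, smul_zero, add_zero]
  · rw [hI₁ x t, hI₃ _ _, hI₂ x t, Prod.mk.injEq]
    constructor
    · rw [map_add, map_smul, hξ31, ← hc31 x]; module
    · rw [map_add, map_smul, hη31, hn31, smul_zero, add_zero]
  · rw [hI₁ x t, hI₂ _ _, hI₃ x t, Prod.neg_mk, Prod.mk.injEq]
    constructor
    · rw [map_add, map_smul, hξ21, hrc21 x]; module
    · rw [map_add, map_smul, hr21, hn21, smul_zero, add_zero, neg_neg]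
  · rw [hI₂ x t, hI₃ _ _, hI₁ x t, Prod.neg_mk, Prod.mk.injEq]
    constructor
    · rw [map_add, map_smul, hξ32, hrc32 x]; module
    · rw [map_add, map_smul, hr32, hn32, smul_zero, add_zero, neg_neg]
  · rw [hI₃ x t, hI₁ _ _, hI₂ x t, Prod.neg_mk, Prod.mk.injEq]
    constructor
    · rw [map_add, map_smul, hξ13, hrc13 x]; module
    · rw [map_add, map_smul, hr13, hn13, smul_zero, add_zero, neg_neg]
  · rw [hI₁ x t, hI₁ _ _, Prod.neg_mk, Prod.mk.injEq]
    constructor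
    · rw [map_add, map_smul, hp1, hΦ₁ x]; module
    · rw [map_add, map_smul, he1, hη₁, zero_add, smul_eq_mul, mul_one]
  · rw [hI₂ x t, hI₂ _ _, Prod.neg_mk, Prod.mk.injEq]
    constructor
    · rw [map_add, map_smul, hp2, hΦ₂ x]; module
    · rw [map_add, map_smul, he2, hη₂, zero_add, smul_eq_mul, mul_one]
  · rw [hI₃ x t, hI₃ _ _, Prod.neg_mk, Prod.mk.injEq]
    constructor
    · rw [map_add, map_smul, hp3, hΦ₃ x]; module
    · rw [map_add, map_smul, he3, hη₃, zero_add, smul_eq_mul, mul_one]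
end

section
/- Let V be a real vector space with an almost contact 3-structure (Φ_α, ξ_α, η_α), α = 1,2,3, and let g be a compatible inner product (g(ξ_α, x) = η_α(x) and g(Φ_α x, Φ_α y) = g(x,y) - η_α(x)η_α(y) for each α). Then for every point s = (a,b,c) of the unit sphere S² ⊂ ℝ³, the triple Φ_s := aΦ₁ + bΦ₂ + cΦ₃, ξ_s := aξ₁ + bξ₂ + cξ₃, η_s := aη₁ + bη₂ + cη₃ is again an almost contact structure compatible with g, i.e. Φ_s² = -id + η_s⊗ξ_s, η_s(ξ_s) = 1, g(ξ_s, x) = η_s(x), and g(Φ_s x, Φ_s y) = g(x,y) - η_s(x)η_s(y). -/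
open RealInnerProductSpace

theorem stmt9 {V : Type*} [NormedAddCommGroup V] [InnerProductSpace ℝ V]
    (Φ₁ Φ₂ Φ₃ : V →ₗ[ℝ] V) (ξ₁ ξ₂ ξ₃ : V) (η₁ η₂ η₃ : V →ₗ[ℝ] ℝ)
    (hΦ₁ : ∀ x : V, Φ₁ (Φ₁ x) = -x + η₁ x • ξ₁) (hη₁ : η₁ ξ₁ = 1)
    (hΦ₂ : ∀ x : V, Φ₂ (Φ₂ x) = -x + η₂ x • ξ₂) (hη₂ : η₂ ξ₂ = 1)
    (hΦ₃ : ∀ x : V, Φ₃ (Φ₃ x) = -x + η₃ x • ξ₃) (hη₃ : η₃ ξ₃ = 1)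
    -- cyclic relations
    (hc12 : ∀ x : V, Φ₁ (Φ₂ x) - η₂ x • ξ₁ = Φ₃ x)
    (hc23 : ∀ x : V, Φ₂ (Φ₃ x) - η₃ x • ξ₂ = Φ₁ x)
    (hc31 : ∀ x : V, Φ₃ (Φ₁ x) - η₁ x • ξ₃ = Φ₂ x)
    -- anticyclic counterparts
    (ha12 : ∀ x : V, -Φ₂ (Φ₁ x) + η₁ x • ξ₂ = Φ₃ x)
    (ha23 : ∀ x : V, -Φ₃ (Φ₂ x) + η₂ x • ξ₃ = Φ₁ x)
    (ha31 : ∀ x : V, -Φ₁ (Φ₃ x) + η₃ x • ξ₁ = Φ₂ x)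
    (hξ12 : Φ₁ ξ₂ = ξ₃) (hξ23 : Φ₂ ξ₃ = ξ₁) (hξ31 : Φ₃ ξ₁ = ξ₂)
    (hξ21 : Φ₂ ξ₁ = -ξ₃) (hξ32 : Φ₃ ξ₂ = -ξ₁) (hξ13 : Φ₁ ξ₃ = -ξ₂)
    (hη12 : ∀ x : V, η₁ (Φ₂ x) = η₃ x)
    (hη23 : ∀ x : V, η₂ (Φ₃ x) = η₁ x)
    (hη31 : ∀ x : V, η₃ (Φ₁ x) = η₂ x)
    (hη21 : ∀ x : V, η₂ (Φ₁ x) = -η₃ x)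
    (hη32 : ∀ x : V, η₃ (Φ₂ x) = -η₁ x)
    (hη13 : ∀ x : V, η₁ (Φ₃ x) = -η₂ x)
    -- compatible inner product
    (hg1 : ∀ x : V, ⟪ξ₁, x⟫ = η₁ x)
    (hg2 : ∀ x : V, ⟪ξ₂, x⟫ = η₂ x)
    (hg3 : ∀ x : V, ⟪ξ₃, x⟫ = η₃ x)
    (hgΦ1 : ∀ x y : V, ⟪Φ₁ x, Φ₁ y⟫ = ⟪x, y⟫ - η₁ x * η₁ y)
    (hgΦ2 : ∀ x y : V, ⟪Φ₂ x, Φ₂ y⟫ = ⟪x, y⟫ - η₂ x * η₂ y)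
    (hgΦ3 : ∀ x y : V, ⟪Φ₃ x, Φ₃ y⟫ = ⟪x, y⟫ - η₃ x * η₃ y)
    (a b c : ℝ) (hs : a ^ 2 + b ^ 2 + c ^ 2 = 1)
    (Φs : V →ₗ[ℝ] V) (ξs : V) (ηs : V →ₗ[ℝ] ℝ)
    (hΦs : Φs = a • Φ₁ + b • Φ₂ + c • Φ₃)
    (hξs : ξs = a • ξ₁ + b • ξ₂ + c • ξ₃)
    (hηs : ηs = a • η₁ + b • η₂ + c • η₃) :
    (∀ x : V, Φs (Φs x) = -x + ηs x • ξs) ∧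
    ηs ξs = 1 ∧
    (∀ x : V, ⟪ξs, x⟫ = ηs x) ∧
    (∀ x y : V, ⟪Φs x, Φs y⟫ = ⟪x, y⟫ - ηs x * ηs y) := by
  -- composition identities
  have h12 : ∀ x : V, Φ₁ (Φ₂ x) = Φ₃ x + η₂ x • ξ₁ := fun x => by
    have := hc12 x; linear_combination (norm := module) this
  have h21 : ∀ x : V, Φ₂ (Φ₁ x) = η₁ x • ξ₂ - Φ₃ x := fun x => by
    have := ha12 x; linear_combination (norm := module) -this
  have h23 : ∀ x : V, Φ₂ (Φ₃ x) = Φ₁ x + η₃ x • ξ₂ := fun x => by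
    have := hc23 x; linear_combination (norm := module) this
  have h32 : ∀ x : V, Φ₃ (Φ₂ x) = η₂ x • ξ₃ - Φ₁ x := fun x => by
    have := ha23 x; linear_combination (norm := module) -this
  have h31 : ∀ x : V, Φ₃ (Φ₁ x) = Φ₂ x + η₁ x • ξ₃ := fun x => by
    have := hc31 x; linear_combination (norm := module) this
  have h13 : ∀ x : V, Φ₁ (Φ₃ x) = η₃ x • ξ₁ - Φ₂ x := fun x => by
    have := ha31 x; linear_combination (norm := module) -this
  -- cross values of η on ξ's vanish
  have e12 : η₁ ξ₂ = 0 ∧ η₂ ξ₁ = 0 := by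
    have hsym : η₁ ξ₂ = η₂ ξ₁ := by rw [← hg1, ← hg2, real_inner_comm]
    have : η₁ ξ₂ = -η₂ ξ₁ := by rw [← hξ31, hη13]
    constructor <;> linarith [hsym, this]
  have e23 : η₂ ξ₃ = 0 ∧ η₃ ξ₂ = 0 := by
    have hsym : η₂ ξ₃ = η₃ ξ₂ := by rw [← hg2, ← hg3, real_inner_comm]
    have : η₂ ξ₃ = -η₃ ξ₂ := by rw [← hξ12, hη21]
    constructor <;> linarith [hsym, this]
  have e31 : η₃ ξ₁ = 0 ∧ η₁ ξ₃ = 0 := by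
    have hsym : η₃ ξ₁ = η₁ ξ₃ := by rw [← hg3, ← hg1, real_inner_comm]
    have : η₃ ξ₁ = -η₁ ξ₃ := by rw [← hξ23, hη32]
    constructor <;> linarith [hsym, this]
  -- η_α ∘ Φ_α = 0
  have k1 : ∀ x : V, η₁ (Φ₁ x) = 0 := by
    intro x
    have h := hgΦ1 (Φ₁ x) (Φ₁ x)
    rw [hΦ₁ x, hgΦ1 x x] at h
    have hx1 : ⟪x, ξ₁⟫ = η₁ x := by rw [real_inner_comm, hg1]
    have hξ : ⟪ξ₁, ξ₁⟫ = (1 : ℝ) := by rw [hg1, hη₁]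
    simp only [inner_add_left, inner_add_right, inner_neg_left, inner_neg_right,
      real_inner_smul_left, real_inner_smul_right, hx1, hg1, hξ, hη₁, mul_one] at h
    exact mul_self_eq_zero.mp (by linarith)
  have k2 : ∀ x : V, η₂ (Φ₂ x) = 0 := by
    intro x
    have h := hgΦ2 (Φ₂ x) (Φ₂ x)
    rw [hΦ₂ x, hgΦ2 x x] at h
    have hx1 : ⟪x, ξ₂⟫ = η₂ x := by rw [real_inner_comm, hg2]
    have hξ : ⟪ξ₂, ξ₂⟫ = (1 : ℝ) := by rw [hg2, hη₂]
    simp only [inner_add_left, inner_add_right, inner_neg_left, inner_neg_right,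
      real_inner_smul_left, real_inner_smul_right, hx1, hg2, hξ, hη₂, mul_one] at h
    exact mul_self_eq_zero.mp (by linarith)
  have k3 : ∀ x : V, η₃ (Φ₃ x) = 0 := by
    intro x
    have h := hgΦ3 (Φ₃ x) (Φ₃ x)
    rw [hΦ₃ x, hgΦ3 x x] at h
    have hx1 : ⟪x, ξ₃⟫ = η₃ x := by rw [real_inner_comm, hg3]
    have hξ : ⟪ξ₃, ξ₃⟫ = (1 : ℝ) := by rw [hg3, hη₃]
    simp only [inner_add_left, inner_add_right, inner_neg_left, inner_neg_right,
      real_inner_smul_left, real_inner_smul_right, hx1, hg3, hξ, hη₃, mul_one] at h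
    exact mul_self_eq_zero.mp (by linarith)
  -- cross inner-product identities
  have g12 : ∀ x y : V, ⟪Φ₁ x, Φ₂ y⟫ = -⟪x, Φ₃ y⟫ - η₁ x * η₂ y := by
    intro x y
    have hΦξ : ⟪Φ₁ x, ξ₁⟫ = 0 := by rw [real_inner_comm, hg1, k1]
    rw [show Φ₂ y = -Φ₁ (Φ₃ y) + η₃ y • ξ₁ from (ha31 y).symm]
    rw [inner_add_right, inner_neg_right, real_inner_smul_right, hgΦ1, hη13, hΦξ]
    ring
  have g21 : ∀ x y : V, ⟪Φ₂ x, Φ₁ y⟫ = ⟪x, Φ₃ y⟫ - η₂ x * η₁ y := by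
    intro x y
    have hΦξ : ⟪Φ₂ x, ξ₂⟫ = 0 := by rw [real_inner_comm, hg2, k2]
    rw [show Φ₁ y = Φ₂ (Φ₃ y) - η₃ y • ξ₂ from (hc23 y).symm]
    rw [inner_sub_right, real_inner_smul_right, hgΦ2, hη23, hΦξ]
    ring
  have g23 : ∀ x y : V, ⟪Φ₂ x, Φ₃ y⟫ = -⟪x, Φ₁ y⟫ - η₂ x * η₃ y := by
    intro x y
    have hΦξ : ⟪Φ₂ x, ξ₂⟫ = 0 := by rw [real_inner_comm, hg2, k2]
    rw [show Φ₃ y = -Φ₂ (Φ₁ y) + η₁ y • ξ₂ from (ha12 y).symm]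
    rw [inner_add_right, inner_neg_right, real_inner_smul_right, hgΦ2, hη21, hΦξ]
    ring
  have g32 : ∀ x y : V, ⟪Φ₃ x, Φ₂ y⟫ = ⟪x, Φ₁ y⟫ - η₃ x * η₂ y := by
    intro x y
    have hΦξ : ⟪Φ₃ x, ξ₃⟫ = 0 := by rw [real_inner_comm, hg3, k3]
    rw [show Φ₂ y = Φ₃ (Φ₁ y) - η₁ y • ξ₃ from (hc31 y).symm]
    rw [inner_sub_right, real_inner_smul_right, hgΦ3, hη31, hΦξ]
    ring
  have g31 : ∀ x y : V, ⟪Φ₃ x, Φ₁ y⟫ = -⟪x, Φ₂ y⟫ - η₃ x * η₁ y := by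
    intro x y
    have hΦξ : ⟪Φ₃ x, ξ₃⟫ = 0 := by rw [real_inner_comm, hg3, k3]
    rw [show Φ₁ y = -Φ₃ (Φ₂ y) + η₂ y • ξ₃ from (ha23 y).symm]
    rw [inner_add_right, inner_neg_right, real_inner_smul_right, hgΦ3, hη32, hΦξ]
    ring
  have g13 : ∀ x y : V, ⟪Φ₁ x, Φ₃ y⟫ = ⟪x, Φ₂ y⟫ - η₁ x * η₃ y := by
    intro x y
    have hΦξ : ⟪Φ₁ x, ξ₁⟫ = 0 := by rw [real_inner_comm, hg1, k1]
    rw [show Φ₃ y = Φ₁ (Φ₂ y) - η₂ y • ξ₁ from (hc12 y).symm]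
    rw [inner_sub_right, real_inner_smul_right, hgΦ1, hη12, hΦξ]
    ring
  subst hΦs hξs hηs
  refine ⟨?_, ?_, ?_, ?_⟩
  · intro x
    simp only [LinearMap.add_apply, LinearMap.smul_apply, map_add, map_smul,
      hΦ₁, hΦ₂, hΦ₃, h12, h21, h23, h32, h31, h13]
    match_scalars <;> (try simp only [smul_eq_mul]) <;> first | ring1 | (linear_combination hs) | (linear_combination -hs)
  · simp only [LinearMap.add_apply, LinearMap.smul_apply, map_add, map_smul,
      smul_eq_mul, hη₁, hη₂, hη₃, e12.1, e12.2, e23.1, e23.2, e31.1, e31.2]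
    linear_combination hs
  · intro x
    simp only [LinearMap.add_apply, LinearMap.smul_apply, smul_eq_mul,
      inner_add_left, real_inner_smul_left, hg1, hg2, hg3]
  · intro x y
    simp only [LinearMap.add_apply, LinearMap.smul_apply, map_add, map_smul, smul_eq_mul,
      inner_add_left, inner_add_right, real_inner_smul_left, real_inner_smul_right,
      hgΦ1, hgΦ2, hgΦ3, g12, g21, g23, g32, g31, g13]
    linear_combination ⟪x, y⟫ * hs
end

section
/- Let V be a real vector space with two almost contact structures (Φ₁, ξ₁, η₁), (Φ₂, ξ₂, η₂) satisfying Kuo's compatibility relations (Φ₁ξ₂ = -Φ₂ξ₁, η₁∘Φ₂ = -η₂∘Φ₁, η₁(ξ₂) = η₂(ξ₁) = 0, Φ₁∘Φ₂ - η₂⊗ξ₁ = -Φ₂∘Φ₁ + η₁⊗ξ₂). With ξ₃ := Φ₁ξ₂, η₃ := η₁∘Φ₂, Φ₃ := Φ₁∘Φ₂ - η₂⊗ξ₁, the following hold: Φ₂(ξ₃) = ξ₁, Φ₃(ξ₁) = ξ₂, η₂∘Φ₃ = η₁, and η₃∘Φ₁ = η₂. -/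
theorem stmt19 {V : Type*} [AddCommGroup V] [Module ℝ V]
    (Φ₁ Φ₂ : V →ₗ[ℝ] V) (ξ₁ ξ₂ : V) (η₁ η₂ : V →ₗ[ℝ] ℝ)
    (hΦ₁ : ∀ x : V, Φ₁ (Φ₁ x) = -x + η₁ x • ξ₁) (hη₁ : η₁ ξ₁ = 1)
    (hΦ₂ : ∀ x : V, Φ₂ (Φ₂ x) = -x + η₂ x • ξ₂) (hη₂ : η₂ ξ₂ = 1)
    (h1 : Φ₁ ξ₂ = -Φ₂ ξ₁)
    (h2 : ∀ x : V, η₁ (Φ₂ x) = -η₂ (Φ₁ x))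
    (h3 : η₁ ξ₂ = 0) (h4 : η₂ ξ₁ = 0)
    (h5 : ∀ x : V, Φ₁ (Φ₂ x) - η₂ x • ξ₁ = -Φ₂ (Φ₁ x) + η₁ x • ξ₂)
    (ξ₃ : V) (η₃ : V →ₗ[ℝ] ℝ) (Φ₃ : V →ₗ[ℝ] V)
    (hξ₃ : ξ₃ = Φ₁ ξ₂)
    (hη₃ : ∀ x : V, η₃ x = η₁ (Φ₂ x))
    (hΦ₃ : ∀ x : V, Φ₃ x = Φ₁ (Φ₂ x) - η₂ x • ξ₁) :
    Φ₂ ξ₃ = ξ₁ ∧ Φ₃ ξ₁ = ξ₂ ∧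
    (∀ x : V, η₂ (Φ₃ x) = η₁ x) ∧
    (∀ x : V, η₃ (Φ₁ x) = η₂ x) := by
  refine ⟨?_, ?_, ?_, ?_⟩
  · rw [hξ₃, h1, map_neg, hΦ₂, h4]; simp
  · rw [hΦ₃, h4]
    have : Φ₂ ξ₁ = -Φ₁ ξ₂ := by rw [h1, neg_neg]
    rw [this, map_neg, hΦ₁, h3]; simp
  · intro x
    rw [hΦ₃, map_sub, map_smul, h4, ← neg_eq_iff_eq_neg.mpr (h2 (Φ₂ x)), hΦ₂]
    simp [h3]
  · intro x
    rw [hη₃, h2, hΦ₁]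
    simp [h4]
end
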